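/- Under a stable ordering of edges, the size of the vertex cover produced by the greedy matching algorithm changes by at most 2 when a node (and its incident edges) is removed from the graph. -/

import Mathlib

/-- Greedy matching-based vertex cover: process edges in order, adding both
endpoints of each edge that is not yet covered. -/
def greedyCover {V : Type*} [DecidableEq V] (L : List (V × V)) : Finset V :=
  L.foldl (fun C e => if e.1 ∈ C ∨ e.2 ∈ C then C else insert e.1 (insert e.2 C)) ∅

section Aux

variable {V : Type*} [DecidableEq V]

/-- One step of the greedy algorithm. -/
def gstep (C : Finset V) (e : V × V) : Finset V :=
  if e.1 ∈ C ∨ e.2 ∈ C then C else insert e.1 (insert e.2 C)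

lemma gstep_pos (C : Finset V) (a b : V) (h : a ∈ C ∨ b ∈ C) :
    gstep C (a, b) = C := if_pos h

lemma gstep_neg (C : Finset V) (a b : V) (h : ¬(a ∈ C ∨ b ∈ C)) :
    gstep C (a, b) = insert a (insert b C) := if_neg h

/-- The invariant relating the state `C` of the full run and the state `C'`
of the run on the filtered list (edges incident to `vplus` removed). -/
def GInv (vplus : V) (C C' : Finset V) : Prop :=
  (C = C' ∧ vplus ∉ C) ∨
  (∃ w, w ≠ vplus ∧ vplus ∉ C' ∧ w ∉ C' ∧ C = insert vplus (insert w C')) ∨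
  (∃ z, z ≠ vplus ∧ z ∉ C ∧ vplus ∉ C' ∧ insert z C = insert vplus C')

set_option maxHeartbeats 1000000 in
lemma inv_gstep (vplus : V) (a b : V) (hab : a ≠ b) (C C' : Finset V)
    (h : GInv vplus C C') :
    GInv vplus (gstep C (a, b))
      (if a ≠ vplus ∧ b ≠ vplus then gstep C' (a, b) else C') := by
  by_cases hfil : a ≠ vplus ∧ b ≠ vplus
  · rw [if_pos hfil]
    obtain ⟨ha, hb⟩ := hfil
    rcases h with ⟨rfl, hv⟩ | ⟨w, hwv, hvC', hwC', rfl⟩ | ⟨z, hzv, hzC, hvC', hzz⟩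
    · -- state A : equal states
      left
      by_cases hc : a ∈ C ∨ b ∈ C
      · rw [gstep_pos _ _ _ hc]; exact ⟨rfl, hv⟩
      · rw [gstep_neg _ _ _ hc]
        refine ⟨rfl, ?_⟩
        simp only [Finset.mem_insert]
        push_neg
        exact ⟨Ne.symm ha, Ne.symm hb, hv⟩
    · -- state B : C = insert vplus (insert w C')
      by_cases hc' : a ∈ C' ∨ b ∈ C'
      · -- covered in both
        have hc : a ∈ insert vplus (insert w C') ∨ b ∈ insert vplus (insert w C') := by
          rcases hc' with h' | h'
          · exact Or.inl (by simp [h'])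
          · exact Or.inr (by simp [h'])
        rw [gstep_pos _ _ _ hc, gstep_pos _ _ _ hc']
        right; left; exact ⟨w, hwv, hvC', hwC', rfl⟩
      · push_neg at hc'
        obtain ⟨haC', hbC'⟩ := hc'
        rw [gstep_neg C' a b (by push_neg; exact ⟨haC', hbC'⟩)]
        by_cases haw : a = w
        · -- edge (w, b): full skips, filtered adds; go to state C with z = b
          subst haw
          rw [gstep_pos _ _ _ (Or.inl (by simp))]
          right; right
          refine ⟨b, hb, ?_, ?_, ?_⟩
          · simp only [Finset.mem_insert]; push_neg
            exact ⟨hb, Ne.symm hab, hbC'⟩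
          · simp only [Finset.mem_insert]; push_neg
            exact ⟨Ne.symm ha, Ne.symm hb, hvC'⟩
          · ext x; simp only [Finset.mem_insert]; tauto
        · by_cases hbw : b = w
          · -- edge (a, w): full skips, filtered adds; state C with z = a
            subst hbw
            rw [gstep_pos _ _ _ (Or.inr (by simp))]
            right; right
            refine ⟨a, ha, ?_, ?_, ?_⟩
            · simp only [Finset.mem_insert]; push_neg
              exact ⟨ha, hab, haC'⟩
            · simp only [Finset.mem_insert]; push_neg
              exact ⟨Ne.symm ha, Ne.symm hb, hvC'⟩
            · ext x; simp only [Finset.mem_insert]; tauto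
          · -- edge disjoint from {vplus, w}: both add
            have hc : ¬(a ∈ insert vplus (insert w C') ∨ b ∈ insert vplus (insert w C')) := by
              push_neg
              constructor <;> (simp only [Finset.mem_insert]; push_neg)
              · exact ⟨ha, haw, haC'⟩
              · exact ⟨hb, hbw, hbC'⟩
            rw [gstep_neg _ _ _ hc]
            right; left
            refine ⟨w, hwv, ?_, ?_, ?_⟩
            · simp only [Finset.mem_insert]; push_neg
              exact ⟨Ne.symm ha, Ne.symm hb, hvC'⟩
            · simp only [Finset.mem_insert]; push_neg
              exact ⟨fun h' => haw h'.symm, fun h' => hbw h'.symm, hwC'⟩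
            · ext x; simp only [Finset.mem_insert]; tauto
    · -- state C : insert z C = insert vplus C'
      have hx : ∀ x, (x = z ∨ x ∈ C) ↔ (x = vplus ∨ x ∈ C') := by
        intro x
        have : x ∈ insert z C ↔ x ∈ insert vplus C' := by rw [hzz]
        simpa only [Finset.mem_insert] using this
      have hzC' : z ∈ C' := by
        rcases (hx z).mp (Or.inl rfl) with h' | h'
        · exact absurd h' hzv
        · exact h'
      have hvC : vplus ∈ C := by
        rcases (hx vplus).mpr (Or.inl rfl) with h' | h'
        · exact absurd h'.symm hzv
        · exact h'
      by_cases haz : a = z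
      · subst haz
        by_cases hbC : b ∈ C
        · rw [gstep_pos _ _ _ (Or.inr hbC), gstep_pos _ _ _ (Or.inl hzC')]
          right; right; exact ⟨a, hzv, hzC, hvC', hzz⟩
        · rw [gstep_neg _ _ _ (by push_neg; exact ⟨hzC, hbC⟩),
            gstep_pos _ _ _ (Or.inl hzC')]
          right; left
          refine ⟨b, hb, hvC', ?_, ?_⟩
          · intro hbC'
            exact hbC (((hx b).mpr (Or.inr hbC')).resolve_left (Ne.symm hab))
          · ext x
            simp only [Finset.mem_insert]
            have := hx x
            tauto
      · by_cases hbz : b = z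
        · subst hbz
          by_cases haC : a ∈ C
          · rw [gstep_pos _ _ _ (Or.inl haC), gstep_pos _ _ _ (Or.inr hzC')]
            right; right; exact ⟨b, hzv, hzC, hvC', hzz⟩
          · rw [gstep_neg _ _ _ (by push_neg; exact ⟨haC, hzC⟩),
              gstep_pos _ _ _ (Or.inr hzC')]
            right; left
            refine ⟨a, ha, hvC', ?_, ?_⟩
            · intro haC'
              exact haC (((hx a).mpr (Or.inr haC')).resolve_left hab)
            · ext x
              simp only [Finset.mem_insert]
              have := hx x
              tauto
        · -- edge disjoint from {z, vplus}
          have hiffa : a ∈ C ↔ a ∈ C' := by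
            constructor
            · intro h'; exact ((hx a).mp (Or.inr h')).resolve_left ha
            · intro h'; exact ((hx a).mpr (Or.inr h')).resolve_left haz
          have hiffb : b ∈ C ↔ b ∈ C' := by
            constructor
            · intro h'; exact ((hx b).mp (Or.inr h')).resolve_left hb
            · intro h'; exact ((hx b).mpr (Or.inr h')).resolve_left hbz
          by_cases hc : a ∈ C ∨ b ∈ C
          · have hc' : a ∈ C' ∨ b ∈ C' := by tauto
            rw [gstep_pos _ _ _ hc, gstep_pos _ _ _ hc']
            right; right; exact ⟨z, hzv, hzC, hvC', hzz⟩
          · have hc' : ¬(a ∈ C' ∨ b ∈ C') := by tauto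
            rw [gstep_neg _ _ _ hc, gstep_neg _ _ _ hc']
            right; right
            refine ⟨z, hzv, ?_, ?_, ?_⟩
            · simp only [Finset.mem_insert]; push_neg
              exact ⟨fun h' => haz h'.symm, fun h' => hbz h'.symm, hzC⟩
            · simp only [Finset.mem_insert]; push_neg
              push_neg at hc'
              exact ⟨Ne.symm ha, Ne.symm hb, hvC'⟩
            · ext x
              simp only [Finset.mem_insert]
              have := hx x
              tauto
  · rw [if_neg hfil]
    -- edge incident to vplus; only full run processes it
    push_neg at hfil
    rcases h with ⟨rfl, hv⟩ | ⟨w, hwv, hvC', hwC', rfl⟩ | ⟨z, hzv, hzC, hvC', hzz⟩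
    · -- state A, C = C'
      by_cases hc : a ∈ C ∨ b ∈ C
      · rw [gstep_pos _ _ _ hc]; left; exact ⟨rfl, hv⟩
      · push_neg at hc
        rw [gstep_neg _ _ _ (by push_neg; exact hc)]
        by_cases hav : a = vplus
        · subst hav
          right; left
          exact ⟨b, Ne.symm hab, hv, hc.2, rfl⟩
        · have hbv : b = vplus := hfil hav
          subst hbv
          right; left
          exact ⟨a, hab, hv, hc.1, Finset.insert_comm a b C⟩
    · -- state B, vplus ∈ C so full run skips
      have hvC : vplus ∈ insert vplus (insert w C') := Finset.mem_insert_self _ _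
      have hc : a ∈ insert vplus (insert w C') ∨ b ∈ insert vplus (insert w C') := by
        by_cases hav : a = vplus
        · exact Or.inl (hav ▸ hvC)
        · exact Or.inr ((hfil hav) ▸ hvC)
      rw [gstep_pos _ _ _ hc]
      right; left; exact ⟨w, hwv, hvC', hwC', rfl⟩
    · -- state C, vplus ∈ C so full run skips
      have hvC : vplus ∈ C := by
        have h' : vplus ∈ insert z C := hzz ▸ Finset.mem_insert_self vplus C'
        rcases Finset.mem_insert.mp h' with h'' | h''
        · exact absurd h''.symm hzv
        · exact h''
      have hc : a ∈ C ∨ b ∈ C := by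
        by_cases hav : a = vplus
        · exact Or.inl (hav ▸ hvC)
        · exact Or.inr ((hfil hav) ▸ hvC)
      rw [gstep_pos _ _ _ hc]
      right; right; exact ⟨z, hzv, hzC, hvC', hzz⟩

lemma inv_foldl (vplus : V) :
    ∀ (L : List (V × V)), (∀ e ∈ L, e.1 ≠ e.2) → ∀ C C', GInv vplus C C' →
      GInv vplus (L.foldl gstep C)
        ((L.filter (fun e => e.1 ≠ vplus ∧ e.2 ≠ vplus)).foldl gstep C')
  | [], _, C, C', h => h
  | e :: L, hs, C, C', h => by
    have h1 := inv_gstep vplus e.1 e.2 (hs e (List.mem_cons_self)) C C' h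
    have hs' : ∀ e ∈ L, e.1 ≠ e.2 := fun e he => hs e (List.mem_cons_of_mem _ he)
    by_cases hf : e.1 ≠ vplus ∧ e.2 ≠ vplus
    · rw [List.filter_cons, if_pos (by simpa using hf)]
      simp only [List.foldl_cons]
      rw [if_pos hf] at h1
      exact inv_foldl vplus L hs' _ _ h1
    · rw [List.filter_cons, if_neg (by simpa using hf)]
      simp only [List.foldl_cons]
      rw [if_neg hf] at h1
      exact inv_foldl vplus L hs' _ _ h1

lemma inv_card (vplus : V) (C C' : Finset V) (h : GInv vplus C C') :
    |((C.card : ℤ)) - (C'.card : ℤ)| ≤ 2 := by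
  rcases h with ⟨rfl, _⟩ | ⟨w, hwv, hv, hw, rfl⟩ | ⟨z, hzv, hz, hv, hzz⟩
  · simp
  · have h1 : vplus ∉ insert w C' := by
      simp only [Finset.mem_insert]; push_neg; exact ⟨Ne.symm hwv, hv⟩
    rw [Finset.card_insert_of_notMem h1, Finset.card_insert_of_notMem hw]
    push_cast
    rw [show ((C'.card : ℤ) + 1 + 1 - C'.card) = 2 by ring]
    norm_num
  · have h1 : C.card + 1 = C'.card + 1 := by
      rw [← Finset.card_insert_of_notMem hz, hzz, Finset.card_insert_of_notMem hv]
    have h2 : C.card = C'.card := by omega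
    rw [h2]
    simp

end Aux

/-- Under a stable edge ordering, removing one node and its incident edges
changes the size of the greedy vertex cover by at most 2. -/
theorem greedyCover_node_sensitivity {V : Type*} [DecidableEq V]
    (L : List (V × V)) (vplus : V) (hsimple : ∀ e ∈ L, e.1 ≠ e.2) :
    |((greedyCover L).card : ℤ) -
      ((greedyCover (L.filter (fun e => e.1 ≠ vplus ∧ e.2 ≠ vplus))).card : ℤ)| ≤ 2 := by
  have h0 : GInv vplus (∅ : Finset V) (∅ : Finset V) :=
    Or.inl ⟨rfl, Finset.notMem_empty _⟩
  have h := inv_foldl vplus L hsimple ∅ ∅ h0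
  exact inv_card vplus _ _ h
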